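/- Let H be a complex inner product space of finite dimension n ≥ 1, let ε ∈ {−1, 1}, and let C : H → H be an antilinear conjugation, i.e. C is additive, C(αx) = conj(α)·C(x), ⟨Cx, Cy⟩ = ⟨y, x⟩ for all x, y ∈ H and α ∈ ℂ, and C² = ε·id. Let T : H → H be an invertible linear map whose adjoint satisfies T* = C∘T∘C. Then there exist an antilinear map J : H → H with J² = id and ⟨Jx, Jy⟩ = ⟨y, x⟩ for all x, y, and a self-adjoint positive semidefinite linear map P : H → H, such that P∘P = T*∘T, J∘P = P∘J, and T = C∘J∘P. -/

import Mathlib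

set_option synthInstance.maxHeartbeats 1000000
set_option maxHeartbeats 1000000

open scoped InnerProductSpace ComplexConjugate

/-- polar-type decomposition T = C∘J∘P of a C-symmetric invertible
linear map (Thm. on skew eigenfunctions, part 1). -/
theorem stmt_15 {H : Type*} [NormedAddCommGroup H] [InnerProductSpace ℂ H]
    [FiniteDimensional ℂ H] (n : ℕ) (hn : 1 ≤ n) (hdim : Module.finrank ℂ H = n)
    (ε : ℂ) (hε : ε = 1 ∨ ε = -1)
    (C : H → H)
    (hCadd : ∀ x y : H, C (x + y) = C x + C y)
    (hCsmul : ∀ (a : ℂ) (x : H), C (a • x) = (conj a) • C x)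
    (hCiso : ∀ x y : H, ⟪C x, C y⟫_ℂ = ⟪y, x⟫_ℂ)
    (hCsq : ∀ x : H, C (C x) = ε • x)
    (T : H →ₗ[ℂ] H) (hTinv : Function.Bijective T)
    (hTadj : ∀ x : H, LinearMap.adjoint T x = C (T (C x))) :
    ∃ (J : H → H) (P : H →ₗ[ℂ] H),
      (∀ x y : H, J (x + y) = J x + J y) ∧
      (∀ (a : ℂ) (x : H), J (a • x) = (conj a) • J x) ∧
      (∀ x y : H, ⟪J x, J y⟫_ℂ = ⟪y, x⟫_ℂ) ∧
      (∀ x : H, J (J x) = x) ∧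
      LinearMap.adjoint P = P ∧
      (∀ x : H, ∃ r : ℝ, 0 ≤ r ∧ ⟪P x, x⟫_ℂ = (r : ℂ)) ∧
      P ∘ₗ P = LinearMap.adjoint T ∘ₗ T ∧
      (∀ x : H, J (P x) = P (J x)) ∧
      (∀ x : H, T x = C (J (P x))) := by
  -- basic facts about ε
  have hεr : conj ε = ε := by rcases hε with h | h <;> simp [h]
  have hε2 : ε * ε = 1 := by rcases hε with h | h <;> norm_num [h]
  have hε2s : ∀ x : H, ε • ε • x = x := fun x => by
    rw [smul_smul, hε2, one_smul]
  have hCε : ∀ x : H, C (ε • x) = ε • C x := fun x => by rw [hCsmul, hεr]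
  -- the continuous linear map version of T
  set Tc : H →L[ℂ] H := LinearMap.toContinuousLinearMap T with hTcdef
  have hTcT : ∀ x, Tc x = T x := fun _ => rfl
  have hadj : ∀ x, ContinuousLinearMap.adjoint Tc x = LinearMap.adjoint T x := by
    intro x
    apply ext_inner_right ℂ
    intro y
    rw [ContinuousLinearMap.adjoint_inner_left, LinearMap.adjoint_inner_left]
    rfl
  -- A = T* T
  set A : H →L[ℂ] H := ContinuousLinearMap.adjoint Tc ∘L Tc with hAdef
  have hApos : A.IsPositive := by
    have h := (ContinuousLinearMap.isPositive_one (E := H) (𝕜 := ℂ)).adjoint_conj Tc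
    simpa [hAdef, ContinuousLinearMap.one_def] using h
  have hA0 : 0 ≤ A := (ContinuousLinearMap.nonneg_iff_isPositive A).mpr hApos
  -- P = sqrt(T* T)
  set Pc : H →L[ℂ] H := CFC.sqrt A with hPcdef
  have hP0 : 0 ≤ Pc := CFC.sqrt_nonneg A
  have hPpos : Pc.IsPositive := (ContinuousLinearMap.nonneg_iff_isPositive Pc).mp hP0
  have hPsym : ∀ x y : H, ⟪Pc x, y⟫_ℂ = ⟪x, Pc y⟫_ℂ :=
    ContinuousLinearMap.isSelfAdjoint_iff_isSymmetric.mp hPpos.isSelfAdjoint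
  have hPsq : ∀ x, Pc (Pc x) = A x := by
    intro x
    have h : Pc * Pc = A := CFC.sqrt_mul_sqrt_self A hA0
    calc Pc (Pc x) = (Pc * Pc) x := rfl
      _ = A x := by rw [h]
  -- P is bijective
  have hPinj : Function.Injective Pc := by
    rw [injective_iff_map_eq_zero]
    intro x hx
    have hAx : A x = 0 := by rw [← hPsq, hx, map_zero]
    have h1 : ⟪Tc x, Tc x⟫_ℂ = 0 := by
      rw [← ContinuousLinearMap.adjoint_inner_left]
      have : ContinuousLinearMap.adjoint Tc (Tc x) = A x := rfl
      rw [this, hAx, inner_zero_left]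
    have h2 : Tc x = 0 := inner_self_eq_zero.mp h1
    exact hTinv.injective (by rw [← hTcT, h2, map_zero])
  have hPbij : Function.Bijective Pc := by
    refine ⟨hPinj, ?_⟩
    have := LinearMap.injective_iff_surjective (f := (Pc : H →ₗ[ℂ] H)) |>.mp hPinj
    exact this
  -- the inverse of P
  set Pe : H ≃ₗ[ℂ] H := LinearEquiv.ofBijective (Pc : H →ₗ[ℂ] H) hPbij with hPedef
  have hPeapp : ∀ x, Pe x = Pc x := fun _ => rfl
  have hPPi : ∀ x, Pc (Pe.symm x) = x := fun x => Pe.apply_symm_apply x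
  have hPiP : ∀ x, Pe.symm (Pc x) = x := fun x => Pe.symm_apply_apply x
  set Pinvc : H →L[ℂ] H := LinearMap.toContinuousLinearMap (Pe.symm : H →ₗ[ℂ] H)
    with hPinvcdef
  have hPinvapp : ∀ x, Pinvc x = Pe.symm x := fun _ => rfl
  -- basic inner product identity for C
  have hveps : ∀ v : H, v = ε • C (C v) := fun v => by rw [hCsq, hε2s]
  have hCinner : ∀ u v : H, ⟪C u, v⟫_ℂ = ε * ⟪C v, u⟫_ℂ := by
    intro u v
    calc ⟪C u, v⟫_ℂ = ⟪C u, ε • C (C v)⟫_ℂ := by rw [← hveps]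
      _ = ε * ⟪C u, C (C v)⟫_ℂ := by rw [inner_smul_right]
      _ = ε * ⟪C v, u⟫_ℂ := by rw [hCiso]
  -- C T = ε • (adjoint T) C
  have hCT : ∀ z : H, C (T z) = ε • LinearMap.adjoint T (C z) := by
    intro z
    rw [hTadj, hCsq, map_smul, hCε, hε2s]
  -- Q x = ε • C (Pc (C x)) as a linear map
  set Qlin : H →ₗ[ℂ] H :=
    { toFun := fun x => ε • C (Pc (C x))
      map_add' := fun x y => by
        show ε • C (Pc (C (x + y))) = ε • C (Pc (C x)) + ε • C (Pc (C y))
        rw [hCadd, map_add, hCadd, smul_add]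
      map_smul' := fun a x => by
        show ε • C (Pc (C (a • x))) = a • (ε • C (Pc (C x)))
        rw [hCsmul, map_smul, hCsmul, Complex.conj_conj, smul_comm] } with hQlindef
  set Q : H →L[ℂ] H := LinearMap.toContinuousLinearMap Qlin with hQdef
  have hQapp : ∀ x, Q x = ε • C (Pc (C x)) := fun _ => rfl
  have hQinner : ∀ x y : H, ⟪Q x, y⟫_ℂ = ⟪C y, Pc (C x)⟫_ℂ := by
    intro x y
    rw [hQapp, inner_smul_left, hεr, hCinner, ← mul_assoc, hε2, one_mul]
  have hQpos : Q.IsPositive := by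
    constructor
    · show (Q : H →ₗ[ℂ] H).IsSymmetric
      intro x y
      show ⟪Q x, y⟫_ℂ = ⟪x, Q y⟫_ℂ
      calc ⟪Q x, y⟫_ℂ = ⟪C y, Pc (C x)⟫_ℂ := hQinner x y
        _ = ⟪Pc (C y), C x⟫_ℂ := (hPsym _ _).symm
        _ = conj ⟪C x, Pc (C y)⟫_ℂ := (inner_conj_symm _ _).symm
        _ = conj ⟪Q y, x⟫_ℂ := by rw [hQinner]
        _ = ⟪x, Q y⟫_ℂ := inner_conj_symm _ _
    · intro x
      rw [ContinuousLinearMap.reApplyInnerSelf_apply, hQinner]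
      exact (RCLike.nonneg_iff.mp (hPpos.inner_nonneg_right (C x))).1
  have hQ0 : 0 ≤ Q := (ContinuousLinearMap.nonneg_iff_isPositive Q).mpr hQpos
  -- Pc ∘ C = C ∘ Q
  have hPcC : ∀ w : H, Pc (C w) = C (Q w) := by
    intro w
    rw [hQapp, hCε, hCsq, hε2s]
  -- Pinvc is positive
  have hPinvsym : ∀ x y : H, ⟪Pinvc x, y⟫_ℂ = ⟪x, Pinvc y⟫_ℂ := by
    intro x y
    calc ⟪Pinvc x, y⟫_ℂ = ⟪Pinvc x, Pc (Pinvc y)⟫_ℂ := by rw [hPinvapp y, hPPi]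
      _ = ⟪Pc (Pinvc x), Pinvc y⟫_ℂ := (hPsym _ _).symm
      _ = ⟪x, Pinvc y⟫_ℂ := by rw [hPinvapp x, hPPi]
  have hPinvpos : Pinvc.IsPositive := by
    constructor
    · exact hPinvsym
    · intro x
      rw [ContinuousLinearMap.reApplyInnerSelf_apply]
      have : ⟪Pinvc x, x⟫_ℂ = ⟪Pinvc x, Pc (Pinvc x)⟫_ℂ := by rw [hPinvapp x, hPPi]
      rw [this]
      exact (RCLike.nonneg_iff.mp (hPpos.inner_nonneg_right (Pinvc x))).1
  -- B = T P⁻¹ T*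
  set B : H →L[ℂ] H := Tc ∘L Pinvc ∘L ContinuousLinearMap.adjoint Tc with hBdef
  have hBapp : ∀ x, B x = Tc (Pe.symm (ContinuousLinearMap.adjoint Tc x)) := fun _ => rfl
  have hBpos : B.IsPositive := hPinvpos.conj_adjoint Tc
  have hB0 : 0 ≤ B := (ContinuousLinearMap.nonneg_iff_isPositive B).mpr hBpos
  -- both B and Q square to T T*
  have hTTadj : ∀ x, ContinuousLinearMap.adjoint Tc (Tc x) = A x := fun _ => rfl
  have hBB : B * B = Tc * ContinuousLinearMap.adjoint Tc := by
    ext x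
    rw [ContinuousLinearMap.mul_apply, ContinuousLinearMap.mul_apply]
    rw [hBapp, hBapp, hTTadj, ← hPsq, hPiP, hPPi]
  have hACx : ∀ z : H, A (C z) = C (T (C (T (C z)))) := by
    intro z
    show ContinuousLinearMap.adjoint Tc (T (C z)) = _
    rw [hadj, hTadj]
  have hQQ : Q * Q = Tc * ContinuousLinearMap.adjoint Tc := by
    ext x
    rw [ContinuousLinearMap.mul_apply, ContinuousLinearMap.mul_apply]
    calc Q (Q x) = ε • C (Pc (C (ε • C (Pc (C x))))) := by rw [hQapp, hQapp]
      _ = ε • C (Pc (ε • C (C (Pc (C x))))) := by rw [hCε]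
      _ = ε • C (ε • Pc (C (C (Pc (C x))))) := by rw [map_smul]
      _ = ε • ε • C (Pc (C (C (Pc (C x))))) := by rw [hCε]
      _ = C (Pc (C (C (Pc (C x))))) := hε2s _
      _ = C (Pc (ε • Pc (C x))) := by rw [hCsq]
      _ = ε • C (Pc (Pc (C x))) := by rw [map_smul, hCε]
      _ = ε • C (A (C x)) := by rw [hPsq]
      _ = ε • C (C (T (C (T (C x))))) := by rw [hACx]
      _ = ε • ε • T (C (T (C x))) := by rw [hCsq]
      _ = T (C (T (C x))) := hε2s _
      _ = T (LinearMap.adjoint T x) := by rw [← hTadj]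
      _ = Tc (ContinuousLinearMap.adjoint Tc x) := by
          rw [hadj x]; exact (hTcT _).symm
  -- hence B = Q by uniqueness of the positive square root
  have hQB : Q = B := by
    have h1 : CFC.sqrt (Tc * ContinuousLinearMap.adjoint Tc) = Q := CFC.sqrt_unique hQQ hQ0
    have h2 : CFC.sqrt (Tc * ContinuousLinearMap.adjoint Tc) = B := CFC.sqrt_unique hBB hB0
    rw [← h1, h2]
  have hQBapp : ∀ x, ε • C (Pc (C x)) = Tc (Pe.symm (ContinuousLinearMap.adjoint Tc x)) := by
    intro x
    rw [← hQapp, ← hBapp, hQB]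
  -- define J
  set J : H → H := fun x => ε • C (Tc (Pe.symm x)) with hJdef
  have hJapp : ∀ x, J x = ε • C (T (Pe.symm x)) := fun _ => rfl
  -- key computation: J (Pc x) = ε • C (T x)
  have hJP : ∀ x, J (Pc x) = ε • C (T x) := by
    intro x
    rw [hJapp, hPiP]
  -- P (J x) = ε • C (T x)
  have hPJ : ∀ x, Pc (J x) = ε • C (T x) := by
    intro x
    rw [hJapp, map_smul, hPcC, hQB, hBapp]
    congr 2
    have h1 : ContinuousLinearMap.adjoint Tc (T (Pe.symm x)) = A (Pe.symm x) := rfl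
    rw [h1, ← hPsq, hPiP, hPPi]
    exact hTcT x
  refine ⟨J, (Pc : H →ₗ[ℂ] H), ?_, ?_, ?_, ?_, ?_, ?_, ?_, ?_, ?_⟩
  · -- additivity of J
    intro x y
    rw [hJapp, hJapp, hJapp, map_add, map_add, hCadd, smul_add]
  · -- antilinearity of J
    intro a x
    rw [hJapp, hJapp, map_smul, map_smul, hCsmul, smul_comm]
  · -- J is antiunitary
    intro x y
    rw [hJapp, hJapp, inner_smul_left, inner_smul_right, hεr, ← mul_assoc, hε2, one_mul,
      hCiso]
    calc ⟪T (Pe.symm y), T (Pe.symm x)⟫_ℂ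
        = ⟪Tc (Pe.symm y), Tc (Pe.symm x)⟫_ℂ := by rw [hTcT, hTcT]
      _ = ⟪Pe.symm y, ContinuousLinearMap.adjoint Tc (Tc (Pe.symm x))⟫_ℂ :=
          (ContinuousLinearMap.adjoint_inner_right _ _ _).symm
      _ = ⟪Pe.symm y, Pc x⟫_ℂ := by rw [hTTadj, ← hPsq, hPPi]
      _ = ⟪Pc (Pe.symm y), x⟫_ℂ := by rw [hPsym]
      _ = ⟪y, x⟫_ℂ := by rw [hPPi]
  · -- J is an involution
    intro x
    have hQBT : ∀ z : H, T (Pe.symm (LinearMap.adjoint T z)) = ε • C (Pc (C z)) := by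
      intro z
      rw [← hadj]
      exact (hQBapp z).symm
    calc J (J x) = ε • C (T (Pe.symm (ε • C (T (Pe.symm x))))) := by rw [hJapp x, hJapp]
      _ = ε • ε • C (T (Pe.symm (C (T (Pe.symm x))))) := by
          rw [map_smul, map_smul, hCε]
      _ = C (T (Pe.symm (C (T (Pe.symm x))))) := hε2s _
      _ = C (T (Pe.symm (ε • LinearMap.adjoint T (C (Pe.symm x))))) := by
          rw [← hCT]
      _ = ε • C (T (Pe.symm (LinearMap.adjoint T (C (Pe.symm x))))) := by
          rw [map_smul, map_smul, hCε]
      _ = ε • C (ε • C (Pc (C (C (Pe.symm x))))) := by rw [hQBT]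
      _ = ε • ε • C (C (Pc (C (C (Pe.symm x))))) := by rw [hCε]
      _ = C (C (Pc (C (C (Pe.symm x))))) := hε2s _
      _ = ε • Pc (C (C (Pe.symm x))) := hCsq _
      _ = ε • Pc (ε • Pe.symm x) := by rw [hCsq]
      _ = ε • ε • Pc (Pe.symm x) := by rw [map_smul]
      _ = Pc (Pe.symm x) := hε2s _
      _ = x := hPPi x
  · -- P self-adjoint
    have h := (LinearMap.eq_adjoint_iff (Pc : H →ₗ[ℂ] H) (Pc : H →ₗ[ℂ] H)).mpr
      (fun x y => hPsym x y)
    exact h.symm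
  · -- positivity of P
    intro x
    refine ⟨(⟪Pc x, x⟫_ℂ).re, (Complex.nonneg_iff.mp (hPpos.inner_nonneg_left x)).1, ?_⟩
    have hreal : conj (⟪Pc x, x⟫_ℂ) = ⟪Pc x, x⟫_ℂ := by
      rw [inner_conj_symm, hPsym]
    exact ((Complex.conj_eq_iff_re).mp hreal).symm
  · -- P ∘ P = T* T
    ext x
    show Pc (Pc x) = LinearMap.adjoint T (T x)
    rw [hPsq, ← hadj, ← hTcT]
    rfl
  · -- J P = P J
    intro x
    show J (Pc x) = Pc (J x)
    rw [hJP, hPJ]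
  · -- T = C J P
    intro x
    show T x = C (J (Pc x))
    rw [hJP, hCε, hCsq, hε2s]
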